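/- A word over the alphabet {E, N, W, S} is a fighting fish if and only if it can be obtained from the word ENWS by a finite sequence of the two strip-gluing operations: (upper strip gluing) replace an occurrence of a factor W^k with k ≥ 1 by the factor N W^k S; (lower strip gluing) replace an occurrence of a factor N^k with k ≥ 1 by the factor E N^k W. -/
import Mathlib


/-- The four-letter alphabet of steps. -/
inductive Letter : Type
  | E | N | W | S
deriving DecidableEq, Repr

open Letter

/-- Fighting fish: words obtainable from `ENWS` by upper, lower and double gluings. -/
inductive IsFF : List Letter → Prop
  | base : IsFF [E, N, W, S]
  | upper (u v : List Letter) :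
      IsFF (u ++ [W] ++ v) → IsFF (u ++ [N, W, S] ++ v)
  | lower (u v : List Letter) :
      IsFF (u ++ [N] ++ v) → IsFF (u ++ [E, N, W] ++ v)
  | double (u v : List Letter) :
      IsFF (u ++ [W, N] ++ v) → IsFF (u ++ [N, W] ++ v)

/-- Generalized fighting fish: words obtainable from the empty word by the
operations `∇_k` (replace `N^k` by `E N^k W`) and `△_k` (replace `W^k` by `N W^k S`),
for `k ≥ 0`. -/
inductive IsGFF : List Letter → Prop
  | base : IsGFF []
  | nabla (u v : List Letter) (k : ℕ) :
      IsGFF (u ++ List.replicate k N ++ v) →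
      IsGFF (u ++ [E] ++ List.replicate k N ++ [W] ++ v)
  | delta (u v : List Letter) (k : ℕ) :
      IsGFF (u ++ List.replicate k W ++ v) →
      IsGFF (u ++ [N] ++ List.replicate k W ++ [S] ++ v)

/-- The latitude of a word: number of `N`'s minus number of `S`'s. -/
def lat (w : List Letter) : ℤ := (w.count N : ℤ) - (w.count S : ℤ)

/-- The longitude of a word: number of `E`'s minus number of `W`'s. -/
def long (w : List Letter) : ℤ := (w.count E : ℤ) - (w.count W : ℤ)

/-- The size of a word: half its length. -/
def size (w : List Letter) : ℕ := w.length / 2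

/-- Words obtainable from `ENWS` by strip gluings: upper strip gluing replaces a
factor `W^k` (`k ≥ 1`) by `N W^k S`; lower strip gluing replaces a factor `N^k`
(`k ≥ 1`) by `E N^k W`. -/
inductive IsStripFF : List Letter → Prop
  | base : IsStripFF [E, N, W, S]
  | upper (u v : List Letter) (k : ℕ) (hk : 1 ≤ k) :
      IsStripFF (u ++ List.replicate k W ++ v) →
      IsStripFF (u ++ [N] ++ List.replicate k W ++ [S] ++ v)
  | lower (u v : List Letter) (k : ℕ) (hk : 1 ≤ k) :
      IsStripFF (u ++ List.replicate k N ++ v) →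
      IsStripFF (u ++ [E] ++ List.replicate k N ++ [W] ++ v)

lemma factor2_split {α : Type*} (x y : α) :
    ∀ (a u b v : List α), a ++ b = u ++ x :: y :: v →
    (∃ t, a = u ++ x :: y :: t ∧ v = t ++ b) ∨
    (a = u ++ [x] ∧ b = y :: v) ∨
    (∃ t, u = a ++ t ∧ b = t ++ x :: y :: v) := by
  intro a
  induction a with
  | nil =>
    intro u b v h
    exact Or.inr (Or.inr ⟨u, rfl, by simpa using h⟩)
  | cons c a ih =>
    intro u b v h
    cases u with
    | nil =>
      simp only [List.nil_append, List.cons_append, List.cons.injEq] at h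
      obtain ⟨rfl, h⟩ := h
      cases a with
      | nil =>
        simp only [List.nil_append] at h
        exact Or.inr (Or.inl ⟨rfl, h⟩)
      | cons d a =>
        simp only [List.cons_append, List.cons.injEq] at h
        obtain ⟨rfl, h⟩ := h
        exact Or.inl ⟨a, rfl, h.symm⟩
    | cons e u =>
      simp only [List.cons_append, List.cons.injEq] at h
      obtain ⟨rfl, h⟩ := h
      rcases ih u b v h with ⟨t, h1, h2⟩ | ⟨h1, h2⟩ | ⟨t, h1, h2⟩
      · exact Or.inl ⟨t, by rw [h1]; simp, h2⟩
      · exact Or.inr (Or.inl ⟨by rw [h1]; simp, h2⟩)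
      · exact Or.inr (Or.inr ⟨t, by rw [h1]; simp, h2⟩)

lemma ff_move_N_left : ∀ (j : ℕ) (u v : List Letter),
    IsFF (u ++ List.replicate j W ++ [N] ++ v) → IsFF (u ++ [N] ++ List.replicate j W ++ v) := by
  intro j
  induction j with
  | zero => intro u v h; simpa using h
  | succ j ih =>
    intro u v h
    have h1 := IsFF.double (u ++ List.replicate j W) v
      (by simpa [List.replicate_succ', List.append_assoc] using h)
    have h2 := ih u ([W] ++ v) (by simpa [List.append_assoc] using h1)
    simpa [List.replicate_succ', List.append_assoc] using h2

lemma ff_move_W_right : ∀ (j : ℕ) (u v : List Letter),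
    IsFF (u ++ [W] ++ List.replicate j N ++ v) → IsFF (u ++ List.replicate j N ++ [W] ++ v) := by
  intro j
  induction j with
  | zero => intro u v h; simpa using h
  | succ j ih =>
    intro u v h
    have h1 := IsFF.double u (List.replicate j N ++ v)
      (by simpa [List.replicate_succ, List.append_assoc] using h)
    have h2 := ih (u ++ [N]) v (by simpa [List.append_assoc] using h1)
    simpa [List.replicate_succ, List.append_assoc] using h2

lemma strip_double (w : List Letter) (hw : IsStripFF w) :
    ∀ u v : List Letter, w = u ++ [W, N] ++ v → IsStripFF (u ++ [N, W] ++ v) := by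
  induction hw with
  | base =>
    intro u v h
    exfalso
    rcases u with _ | ⟨a, _ | ⟨b, _ | ⟨c, _ | ⟨d, u⟩⟩⟩⟩ <;> simp_all
  | upper u' v' k hk prem ih =>
    intro u v h
    simp only [List.append_assoc, List.cons_append, List.nil_append] at h
    rcases factor2_split W N u' u _ v h with ⟨t, rfl, rfl⟩ | ⟨rfl, h2⟩ | ⟨t, rfl, h2⟩
    · have h3 := ih u (t ++ List.replicate k W ++ v') (by simp)
      have h4 := IsStripFF.upper (u ++ [N, W] ++ t) v' k hk
        (by simpa [List.append_assoc] using h3)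
      simpa [List.append_assoc] using h4
    · obtain ⟨rfl⟩ : List.replicate k W ++ S :: v' = v := by
        injection h2
      have h4 := IsStripFF.upper u v' (k + 1) (by omega)
        (by simpa [List.replicate_succ, List.append_assoc] using prem)
      simpa [List.replicate_succ, List.append_assoc] using h4
    · cases t with
      | nil => simp at h2
      | cons c t =>
        simp only [List.cons_append, List.cons.injEq] at h2
        obtain ⟨rfl, h2⟩ := h2
        rcases factor2_split W N (List.replicate k W) t _ v h2 with
          ⟨s, h3, h4⟩ | ⟨h3, h4⟩ | ⟨s, rfl, h4⟩
        · exfalso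
          have : N ∈ List.replicate k W := by rw [h3]; simp
          simpa using List.eq_of_mem_replicate this
        · exact absurd h4 (by simp)
        · cases s with
          | nil => simp at h4
          | cons d s =>
            simp only [List.cons_append, List.cons.injEq] at h4
            obtain ⟨rfl, rfl⟩ := h4
            have h5 := ih (u' ++ List.replicate k W ++ s) v (by simp)
            have h6 := IsStripFF.upper u' (s ++ [N, W] ++ v) k hk
              (by simpa [List.append_assoc] using h5)
            simpa [List.append_assoc] using h6
  | lower u' v' k hk prem ih =>
    intro u v h
    simp only [List.append_assoc, List.cons_append, List.nil_append] at h
    rcases factor2_split W N u' u _ v h with ⟨t, rfl, rfl⟩ | ⟨rfl, h2⟩ | ⟨t, rfl, h2⟩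
    · have h3 := ih u (t ++ List.replicate k N ++ v') (by simp)
      have h4 := IsStripFF.lower (u ++ [N, W] ++ t) v' k hk
        (by simpa [List.append_assoc] using h3)
      simpa [List.append_assoc] using h4
    · exact absurd h2 (by simp)
    · cases t with
      | nil => simp at h2
      | cons c t =>
        simp only [List.cons_append, List.cons.injEq] at h2
        obtain ⟨rfl, h2⟩ := h2
        rcases factor2_split W N (List.replicate k N) t _ v h2 with
          ⟨s, h3, h4⟩ | ⟨h3, h4⟩ | ⟨s, rfl, h4⟩
        · exfalso
          have : W ∈ List.replicate k N := by rw [h3]; simp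
          simpa using List.eq_of_mem_replicate this
        · exact absurd h4 (by simp)
        · cases s with
          | nil =>
            simp only [List.nil_append, List.cons.injEq] at h4
            obtain ⟨-, rfl⟩ := h4
            have h5 := IsStripFF.lower u' v (k + 1) (by omega)
              (by simpa [List.replicate_succ', List.append_assoc] using prem)
            simpa [List.replicate_succ', List.append_assoc] using h5
          | cons d s =>
            simp only [List.cons_append, List.cons.injEq] at h4
            obtain ⟨rfl, rfl⟩ := h4
            have h5 := ih (u' ++ List.replicate k N ++ s) v (by simp)
            have h6 := IsStripFF.lower u' (s ++ [N, W] ++ v) k hk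
              (by simpa [List.append_assoc] using h5)
            simpa [List.append_assoc] using h6


/-- A word is a fighting fish iff it can be obtained from `ENWS` by a finite
sequence of upper and lower strip gluings. -/
theorem fightingFish_iff_stripGluings (w : List Letter) : IsFF w ↔ IsStripFF w := by
  constructor
  · intro h
    induction h with
    | base => exact IsStripFF.base
    | upper u v _ ih =>
      have h1 := IsStripFF.upper u v 1 le_rfl (by simpa using ih)
      simpa using h1
    | lower u v _ ih =>
      have h1 := IsStripFF.lower u v 1 le_rfl (by simpa using ih)
      simpa using h1
    | double u v _ ih => exact strip_double _ ih u v rfl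
  · intro h
    induction h with
    | base => exact IsFF.base
    | upper u v k hk _ ih =>
      obtain ⟨j, rfl⟩ : ∃ j, k = j + 1 := ⟨k - 1, by omega⟩
      have h1 := IsFF.upper (u ++ List.replicate j W) v
        (by simpa [List.replicate_succ', List.append_assoc] using ih)
      have h2 := ff_move_N_left j u (W :: S :: v) (by simpa [List.append_assoc] using h1)
      simpa [List.replicate_succ', List.append_assoc] using h2
    | lower u v k hk _ ih =>
      obtain ⟨j, rfl⟩ : ∃ j, k = j + 1 := ⟨k - 1, by omega⟩
      have h1 := IsFF.lower u (List.replicate j N ++ v)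
        (by simpa [List.replicate_succ, List.append_assoc] using ih)
      have h2 := ff_move_W_right j (u ++ [E, N]) v (by simpa [List.append_assoc] using h1)
      simpa [List.replicate_succ, List.append_assoc] using h2
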